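/- Let p > 2 be prime and k ≥ 2, and fix i ∈ {1,...,k−1}. For j ≥ 0 let N_j denote the total number of zero coordinates among the Gray images G₂(p^i + j), G₂(2p^i + j), ..., G₂(p^k + j) (arguments taken mod p^k). Then N_j is independent of j: N_m = N_n for all m, n ≥ 0. -/

import Mathlib

/-- The generalized Gray map `G₂ : ℤ_{p^k} → ℤ_p^{p^{k-1}}`: for `0 ≤ u ≤ p^{k-1}` it is `1`
in the first `u` coordinates and `0` elsewhere, and `G₂(q·p^{k-1} + r) = (q,…,q) + G₂(r)`. -/
def G2 (p k : ℕ) [NeZero (p ^ k)] (u : ZMod (p ^ k)) : Fin (p ^ (k - 1)) → ZMod p :=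
  fun t => ((u.val / p ^ (k - 1) : ℕ) : ZMod p) +
    if (t : ℕ) < u.val % p ^ (k - 1) then 1 else 0

lemma card_fin_lt' (M r : ℕ) (h : r ≤ M) :
    (Finset.univ.filter (fun t : Fin M => (t : ℕ) < r)).card = r := by
  rw [Finset.card_filter, Fin.sum_univ_eq_sum_range (fun a => if a < r then 1 else 0) M,
    ← Finset.card_filter]
  have : (Finset.range M).filter (· < r) = Finset.range r := by
    ext a; simp only [Finset.mem_filter, Finset.mem_range]; omega
  rw [this, Finset.card_range]

lemma card_fin_not_lt' (M r : ℕ) :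
    (Finset.univ.filter (fun t : Fin M => ¬ (t : ℕ) < r)).card = M - r := by
  rw [Finset.card_filter, Fin.sum_univ_eq_sum_range (fun a => if ¬ a < r then 1 else 0) M,
    ← Finset.card_filter]
  have : (Finset.range M).filter (fun a => ¬ a < r) = Finset.Ico r M := by
    ext a; simp only [Finset.mem_filter, Finset.mem_range, Finset.mem_Ico]; omega
  rw [this, Nat.card_Ico]

/-- The number of zero coordinates of `G₂(u)`. -/
lemma count_zero (p k : ℕ) (hp : 2 ≤ p) (hk : 1 ≤ k) [NeZero (p ^ k)] (u : ZMod (p ^ k)) :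
    (Finset.univ.filter (fun t => G2 p k u t = 0)).card =
      (if u.val / p ^ (k - 1) = p - 1 then u.val % p ^ (k - 1) else 0) +
      (if u.val / p ^ (k - 1) = 0 then p ^ (k - 1) - u.val % p ^ (k - 1) else 0) := by
  haveI : NeZero p := ⟨by omega⟩
  haveI : Fact (1 < p) := ⟨by omega⟩
  set q := u.val / p ^ (k - 1) with hq
  set r := u.val % p ^ (k - 1) with hr
  have hpk : p ^ k = p ^ (k - 1) * p := by
    rw [← pow_succ]; congr 1; omega
  have hMpos : 0 < p ^ (k - 1) := Nat.pow_pos (by omega)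
  have hqlt : q < p := by
    rw [hq]
    exact Nat.div_lt_of_lt_mul (by rw [← hpk]; exact u.val_lt)
  have hrle : r ≤ p ^ (k - 1) := le_of_lt (Nat.mod_lt _ hMpos)
  have hG : ∀ t : Fin (p ^ (k - 1)), G2 p k u t =
      (q : ZMod p) + if (t : ℕ) < r then 1 else 0 := fun t => rfl
  rcases eq_or_ne q 0 with h0 | h0
  · have hne : q ≠ p - 1 := by omega
    rw [if_neg hne, if_pos h0]
    have : (Finset.univ.filter (fun t => G2 p k u t = 0)) =
        (Finset.univ.filter (fun t : Fin (p ^ (k - 1)) => ¬ (t : ℕ) < r)) := by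
      apply Finset.filter_congr
      intro t _
      rw [hG t, h0]
      simp only [Nat.cast_zero, zero_add]
      constructor
      · intro h
        intro hlt
        rw [if_pos hlt] at h
        exact one_ne_zero h
      · intro h; rw [if_neg h]
    rw [this, card_fin_not_lt']
    omega
  · rcases eq_or_ne q (p - 1) with h1 | h1
    · rw [if_pos h1, if_neg h0]
      have : (Finset.univ.filter (fun t => G2 p k u t = 0)) =
          (Finset.univ.filter (fun t : Fin (p ^ (k - 1)) => (t : ℕ) < r)) := by
        apply Finset.filter_congr
        intro t _
        rw [hG t]
        have hq1 : (q : ZMod p) + 1 = 0 := by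
          have : ((q + 1 : ℕ) : ZMod p) = 0 := by
            rw [ZMod.natCast_eq_zero_iff]
            exact ⟨1, by omega⟩
          push_cast at this; linear_combination this
        have hq0 : (q : ZMod p) ≠ 0 := by
          rw [Ne, ZMod.natCast_eq_zero_iff]
          intro hdvd
          rcases hdvd with ⟨c, hc⟩
          rcases Nat.eq_zero_or_pos c with rfl | hcp
          · omega
          · nlinarith [Nat.one_le_iff_ne_zero.2 (by omega : q ≠ 0)]
        constructor
        · intro h
          by_contra hlt
          rw [if_neg hlt, add_zero] at h
          exact hq0 h
        · intro h; rw [if_pos h]; exact hq1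
      rw [this, card_fin_lt' _ _ hrle]; omega
    · rw [if_neg h1, if_neg h0]
      have : (Finset.univ.filter (fun t => G2 p k u t = 0)) = ∅ := by
        apply Finset.filter_false_of_mem
        intro t _
        rw [hG t]
        have hq0 : (q : ZMod p) ≠ 0 := by
          rw [Ne, ZMod.natCast_eq_zero_iff]
          intro hdvd
          exact absurd (Nat.eq_zero_of_dvd_of_lt hdvd hqlt) h0
        have hq1 : (q : ZMod p) + 1 ≠ 0 := by
          intro h
          have : ((q + 1 : ℕ) : ZMod p) = 0 := by push_cast; linear_combination h
          rw [ZMod.natCast_eq_zero_iff] at this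
          have h3 : p ≤ q + 1 := Nat.le_of_dvd (Nat.succ_pos _) this
          omega
        split_ifs with hlt
        · exact hq1
        · rw [add_zero]; exact hq0
      rw [this]; simp

lemma sum_range_zmod (N : ℕ) [NeZero N] (G : ZMod N → ℕ) :
    ∑ x ∈ Finset.range N, G (x : ZMod N) = ∑ z : ZMod N, G z := by
  refine Finset.sum_nbij' (i := fun x => (x : ZMod N)) (j := fun z => z.val) ?_ ?_ ?_ ?_ ?_
  · intro a _; exact Finset.mem_univ _
  · intro z _; exact Finset.mem_range.2 z.val_lt
  · intro a ha; exact ZMod.val_natCast_of_lt (Finset.mem_range.1 ha)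
  · intro z _; exact ZMod.natCast_zmod_val z
  · intro a _; rfl

lemma sum_range_shift (N : ℕ) (hN : 0 < N) (c : ℕ) (g : ℕ → ℕ) :
    ∑ x ∈ Finset.range N, g ((x + c) % N) = ∑ x ∈ Finset.range N, g x := by
  haveI : NeZero N := ⟨by omega⟩
  have h1 : ∀ x ∈ Finset.range N, g ((x + c) % N)
      = (fun z : ZMod N => g z.val) ((x : ZMod N) + (c : ZMod N)) := by
    intro x _
    simp only [← Nat.cast_add, ZMod.val_natCast]
  rw [Finset.sum_congr rfl h1]
  rw [sum_range_zmod N (fun z => g (z + (c : ZMod N)).val)]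
  rw [Fintype.sum_bijective _ (Equiv.addRight (c : ZMod N)).bijective
    (fun z : ZMod N => g (z + (c : ZMod N)).val) (fun z : ZMod N => g z.val) (fun z => rfl)]
  rw [← sum_range_zmod N (fun z => g z.val)]
  apply Finset.sum_congr rfl
  intro x hx
  rw [ZMod.val_natCast_of_lt (Finset.mem_range.1 hx)]

lemma mod_mul_add (a n q r : ℕ) (hn : 0 < n) (hr : r < q) :
    (a * q + r) % (n * q) = (a % n) * q + r := by
  have h1 : a * q + r = ((a % n) * q + r) + (a / n) * (n * q) := by
    conv_lhs => rw [← Nat.div_add_mod a n]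
    ring
  rw [h1, Nat.add_mul_mod_self_right, Nat.mod_eq_of_lt]
  have h2 : (a % n + 1) * q ≤ n * q := Nat.mul_le_mul_right _ (Nat.mod_lt a hn)
  nlinarith

lemma div_mod_of_mul_add (a M Q P r0 : ℕ) (hM : 0 < M) (hr : r0 < Q) (hP : P = M * Q) :
    (a * Q + r0) / P = a / M ∧ (a * Q + r0) % P = (a % M) * Q + r0 := by
  have hv : a * Q + r0 = ((a % M) * Q + r0) + (a / M) * P := by
    conv_lhs => rw [← Nat.div_add_mod a M]
    rw [hP]; ring
  have hlt : (a % M) * Q + r0 < P := by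
    have h2 : (a % M + 1) * Q ≤ M * Q := Nat.mul_le_mul_right _ (Nat.mod_lt a hM)
    rw [hP]; nlinarith
  have hP0 : 0 < P := by omega
  constructor
  · rw [hv, Nat.add_mul_div_right _ _ hP0, Nat.div_eq_of_lt hlt, zero_add]
  · rw [hv, Nat.add_mul_mod_self_right, Nat.mod_eq_of_lt hlt]

lemma main_const (p k i : ℕ) (hp : 2 ≤ p) (hk : 2 ≤ k)
    (hi1 : 1 ≤ i) (hi2 : i ≤ k - 1) [NeZero (p ^ k)] (j : ℕ) :
    (∑ s ∈ Finset.Icc 1 (p ^ (k - i)),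
        (Finset.univ.filter
          (fun t => G2 p k ((s * p ^ i + j : ℕ) : ZMod (p ^ k)) t = 0)).card)
      = p ^ (k - 1 - i) * p ^ (k - 1) := by
  set N := p ^ (k - i) with hN
  set M := p ^ (k - 1 - i) with hM
  set Q := p ^ i with hQ
  set P := p ^ (k - 1) with hP
  have hppos : 0 < p := by omega
  have hMpos : 0 < M := Nat.pow_pos hppos
  have hQpos : 0 < Q := Nat.pow_pos hppos
  have hNpos : 0 < N := Nat.pow_pos hppos
  have hPMQ : P = M * Q := by
    rw [hP, hM, hQ, ← pow_add]; congr 1; omega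
  have hNpM : N = p * M := by
    rw [hN, hM, ← pow_succ']; congr 1; omega
  have hpkNQ : p ^ k = N * Q := by
    rw [hN, hQ, ← pow_add]; congr 1; omega
  set r0 := j % Q with hr0
  set c := j / Q with hc
  have hr0lt : r0 < Q := Nat.mod_lt _ hQpos
  set g : ℕ → ℕ := fun a =>
    (if (a * Q + r0) / P = p - 1 then (a * Q + r0) % P else 0) +
    (if (a * Q + r0) / P = 0 then P - (a * Q + r0) % P else 0) with hg
  -- Step A: each term equals g ((s + c) % N)
  have stepA : ∀ s ∈ Finset.Icc 1 N,
      (Finset.univ.filter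
        (fun t => G2 p k ((s * Q + j : ℕ) : ZMod (p ^ k)) t = 0)).card = g ((s + c) % N) := by
    intro s _
    rw [count_zero p k hp (by omega)]
    have hval : ((s * Q + j : ℕ) : ZMod (p ^ k)).val = ((s + c) % N) * Q + r0 := by
      rw [ZMod.val_natCast]
      have h1 : s * Q + j = (s + c) * Q + r0 := by
        have h2 : Q * c + r0 = j := Nat.div_add_mod j Q
        rw [add_mul, mul_comm c Q]
        omega
      rw [h1, hpkNQ, mod_mul_add _ _ _ _ hNpos hr0lt]
    rw [hval]
  rw [Finset.sum_congr rfl stepA]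
  -- Step B: reindex to a plain sum over range N
  have stepB : ∑ s ∈ Finset.Icc 1 N, g ((s + c) % N) = ∑ a ∈ Finset.range N, g a := by
    rw [← Finset.Ico_add_one_right_eq_Icc, Finset.sum_Ico_eq_sum_range]
    simp only [Nat.add_sub_cancel]
    have : ∀ x ∈ Finset.range N, g ((1 + x + c) % N) = g ((x + (1 + c)) % N) := by
      intro x _; rw [show 1 + x + c = x + (1 + c) from by omega]
    rw [Finset.sum_congr rfl this, sum_range_shift N hNpos (1 + c) g]
  rw [stepB]
  -- Step C: evaluate the sum
  have hgform : ∀ a, g a =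
      (if a / M = p - 1 then (a % M) * Q + r0 else 0) +
      (if a / M = 0 then P - ((a % M) * Q + r0) else 0) := by
    intro a
    obtain ⟨hd, hm⟩ := div_mod_of_mul_add a M Q P r0 hMpos hr0lt hPMQ
    rw [hg]; simp only [hd, hm]
  rw [Finset.sum_congr rfl (fun a _ => hgform a), Finset.sum_add_distrib]
  have hfilter1 : (Finset.range (p * M)).filter (fun a => a / M = p - 1) =
      Finset.Ico ((p - 1) * M) (p * M) := by
    ext b
    simp only [Finset.mem_filter, Finset.mem_range, Finset.mem_Ico]
    have e1 : (p - 1) ≤ b / M ↔ (p - 1) * M ≤ b := Nat.le_div_iff_mul_le hMpos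
    have e2 : b / M < p ↔ b < p * M := Nat.div_lt_iff_lt_mul hMpos
    omega
  have hfilter2 : (Finset.range (p * M)).filter (fun a => a / M = 0) = Finset.range M := by
    ext b
    simp only [Finset.mem_filter, Finset.mem_range]
    have e2 : b / M < 1 ↔ b < 1 * M := Nat.div_lt_iff_lt_mul hMpos
    rw [one_mul] at e2
    have e0 : 0 ≤ b / M := Nat.zero_le _
    have e3 : M ≤ p * M := Nat.le_mul_of_pos_left _ hppos
    omega
  have hsum1 : ∑ a ∈ Finset.range N, (if a / M = p - 1 then (a % M) * Q + r0 else 0)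
      = ∑ x ∈ Finset.range M, (x * Q + r0) := by
    rw [hNpM, ← Finset.sum_filter, hfilter1, Finset.sum_Ico_eq_sum_range]
    have hMeq : p * M - (p - 1) * M = M := by
      rw [← Nat.sub_mul]
      have : p - (p - 1) = 1 := by omega
      rw [this, one_mul]
    rw [hMeq]
    apply Finset.sum_congr rfl
    intro x hx
    congr 1
    rw [add_comm, Nat.add_mul_mod_self_right, Nat.mod_eq_of_lt (Finset.mem_range.1 hx)]
  have hsum2 : ∑ a ∈ Finset.range N, (if a / M = 0 then P - ((a % M) * Q + r0) else 0)
      = ∑ x ∈ Finset.range M, (P - (x * Q + r0)) := by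
    rw [hNpM, ← Finset.sum_filter, hfilter2]
    apply Finset.sum_congr rfl
    intro x hx
    congr 2
    rw [Nat.mod_eq_of_lt (Finset.mem_range.1 hx)]
  rw [hsum1, hsum2, ← Finset.sum_add_distrib]
  have hterm : ∀ x ∈ Finset.range M, (x * Q + r0) + (P - (x * Q + r0)) = P := by
    intro x hx
    have hxM : x < M := Finset.mem_range.1 hx
    have : x * Q + r0 < P := by
      have h2 : (x + 1) * Q ≤ M * Q := Nat.mul_le_mul_right _ (by omega)
      rw [hPMQ]; nlinarith
    omega
  rw [Finset.sum_congr rfl hterm, Finset.sum_const, Finset.card_range, smul_eq_mul]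

theorem stmt15 (p k i : ℕ) (hp : p.Prime) (hodd : 2 < p) (hk : 2 ≤ k)
    (hi1 : 1 ≤ i) (hi2 : i ≤ k - 1) [NeZero (p ^ k)] :
    ∀ m n : ℕ,
      (∑ s ∈ Finset.Icc 1 (p ^ (k - i)),
          (Finset.univ.filter
            (fun t => G2 p k ((s * p ^ i + m : ℕ) : ZMod (p ^ k)) t = 0)).card)
        = ∑ s ∈ Finset.Icc 1 (p ^ (k - i)),
          (Finset.univ.filter
            (fun t => G2 p k ((s * p ^ i + n : ℕ) : ZMod (p ^ k)) t = 0)).card := by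
  intro m n
  rw [main_const p k i (by omega) hk hi1 hi2 m, main_const p k i (by omega) hk hi1 hi2 n]
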